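/- Let α, β > 0 with α + β ≥ 1, and let f : [a,b] → ℝ be absolutely continuous with f(a)=0. Then ∫ₐᵇ |f(x)|^β |f'(x)|^α dx ≤ (α/(α+β))^{α/(α+β)} · [∫ₐᵇ (x−a)^{α+β−1} dx]^{β/(α+β)} · ∫ₐᵇ |f'(x)|^{α+β} dx. -/

import Mathlib

open MeasureTheory intervalIntegral Set
open scoped ENNReal

/-- Bernoulli-type convexity inequality. -/
lemma bern_aux {u v c : ℝ} (hv : 0 ≤ v) (hvu : v ≤ u) (hc : 0 < c) :
    v ^ (c + 1) + (c + 1) * v ^ c * (u - v) ≤ u ^ (c + 1) := by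
  rcases eq_or_lt_of_le hv with h0 | hv0
  · rw [← h0]
    rw [Real.zero_rpow (by positivity : c + (1:ℝ) ≠ 0), Real.zero_rpow hc.ne']
    have : (0:ℝ) ≤ u ^ (c+1) := Real.rpow_nonneg (by linarith) _
    linarith
  · have hu0 : 0 < u := lt_of_lt_of_le hv0 hvu
    have hs : (-1 : ℝ) ≤ (u - v) / v := by
      have : 0 ≤ (u - v) / v := div_nonneg (by linarith) hv0.le
      linarith
    have hb := one_add_mul_self_le_rpow_one_add hs (by linarith : (1:ℝ) ≤ c + 1)
    have h1s : 1 + (u - v) / v = u / v := by field_simp; ring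
    rw [h1s] at hb
    have hmul := mul_le_mul_of_nonneg_right hb (by positivity : (0:ℝ) ≤ v ^ (c + 1))
    calc v ^ (c + 1) + (c + 1) * v ^ c * (u - v)
        = (1 + (c + 1) * ((u - v) / v)) * v ^ (c + 1) := by
          have hvc : v ^ (c + 1) = v ^ c * v := by
            rw [Real.rpow_add hv0, Real.rpow_one]
          rw [hvc]; field_simp
      _ ≤ (u / v) ^ (c + 1) * v ^ (c + 1) := hmul
      _ = u ^ (c + 1) := by
          rw [← Real.mul_rpow (div_nonneg hu0.le hv0.le) hv0.le,
            div_mul_cancel₀ _ hv0.ne']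

/-- Key chain-rule-free estimate: `∫ₐᵇ F^c g ≤ F(b)^(c+1)/(c+1)` for `F` a primitive of `g ≥ 0`. -/
lemma key_chain {a b c : ℝ} (hab : a ≤ b) (hc : 0 < c) (g F : ℝ → ℝ)
    (hg0 : ∀ t, 0 ≤ g t) (hgint : IntervalIntegrable g volume a b)
    (hFcont : Continuous F) (hFnn : ∀ x, 0 ≤ F x)
    (hF : ∀ x ∈ Set.Icc a b, F x = ∫ t in a..x, g t) :
    ∫ t in a..b, F t ^ c * g t ≤ F b ^ (c + 1) / (c + 1) := by
  have hFa : F a = 0 := by rw [hF a ⟨le_refl a, hab⟩, integral_same]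
  have hFc : Continuous fun t => F t ^ c := hFcont.rpow_const fun x => Or.inr hc.le
  -- integrability of g on subintervals
  have hgIcc : IntegrableOn g (Icc a b) volume := by
    rw [integrableOn_Icc_iff_integrableOn_Ioc]
    exact hgint.def'.mono_set (by rw [uIoc_of_le hab])
  have hgsub : ∀ x ∈ Icc a b, ∀ y ∈ Icc a b, IntervalIntegrable g volume x y := by
    intro x hx y hy
    apply (hgIcc.mono_set _).intervalIntegrable
    rw [← uIcc_of_le hab]
    exact uIcc_subset_uIcc (by rwa [uIcc_of_le hab]) (by rwa [uIcc_of_le hab])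
  -- increments of F
  have hFdiff : ∀ x ∈ Icc a b, ∀ y ∈ Icc a b, x ≤ y →
      F y - F x = ∫ t in x..y, g t := by
    intro x hx y hy hxy
    rw [hF x hx, hF y hy, ← integral_add_adjacent_intervals (hgsub a ⟨le_refl a, hab⟩ x hx)
      (hgsub x hx y hy)]
    ring
  have hFmono : ∀ x ∈ Icc a b, ∀ y ∈ Icc a b, x ≤ y → F x ≤ F y := by
    intro x hx y hy hxy
    have := hFdiff x hx y hy hxy
    have hnn : 0 ≤ ∫ t in x..y, g t :=
      integral_nonneg hxy fun t _ => hg0 t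
    linarith
  -- integrability of the integrand
  have hint : ∀ x ∈ Icc a b, ∀ y ∈ Icc a b, IntervalIntegrable (fun t => F t ^ c * g t) volume x y :=
    fun x hx y hy => (hgsub x hx y hy).continuousOn_mul hFc.continuousOn
  set Φ : ℝ → ℝ := fun x => ∫ t in a..x, F t ^ c * g t with hΦ
  have hΦcont : ContinuousOn Φ (Icc a b) := by
    have hI : IntegrableOn (fun t => F t ^ c * g t) (uIcc a b) volume := by
      rw [uIcc_of_le hab, integrableOn_Icc_iff_integrableOn_Ioc]
      exact (hint a ⟨le_refl a, hab⟩ b ⟨hab, le_refl b⟩).def'.mono_set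
        (by rw [uIoc_of_le hab])
    rw [← uIcc_of_le hab]
    exact continuousOn_primitive_interval hI
  have main : ∀ ε > 0, Φ b ≤ F b ^ (c+1) / (c+1) + ε * (F b + (b - a)) := by
    intro ε hε
    set S := {x : ℝ | Φ x ≤ F x ^ (c+1) / (c+1) + ε * (F x + (x - a))} with hS
    have hsub : Icc a b ⊆ S := by
      apply IsClosed.Icc_subset_of_forall_exists_gt
      · -- closedness
        have hcont : ContinuousOn
            (fun x => (Φ x, F x ^ (c+1) / (c+1) + ε * (F x + (x - a)))) (Icc a b) := by
          apply hΦcont.prodMk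
          apply ContinuousOn.add
          · exact ((hFcont.rpow_const fun x => Or.inr (by linarith)).continuousOn).div_const _
          · exact (continuousOn_const.mul ((hFcont.continuousOn).add
              ((continuous_id.sub continuous_const).continuousOn)))
        have : S ∩ Icc a b = Icc a b ∩
            (fun x => (Φ x, F x ^ (c+1) / (c+1) + ε * (F x + (x - a)))) ⁻¹'
              {p : ℝ × ℝ | p.1 ≤ p.2} := by
          ext x; simp [hS, and_comm]
        rw [this]
        exact hcont.preimage_isClosed_of_isClosed isClosed_Icc isClosed_le_prod
      · -- a ∈ S
        show Φ a ≤ _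
        rw [hΦ]
        simp only [integral_same, hFa]
        rw [Real.zero_rpow (by positivity : c + (1:ℝ) ≠ 0)]
        simp
      · -- step to the right
        rintro x ⟨hxS, hxab⟩ y hy
        have hxI : x ∈ Icc a b := ⟨hxab.1, hxab.2.le⟩
        have hδ := Metric.continuousAt_iff.1 (hFc.continuousAt (x := x)) ε hε
        obtain ⟨δ, hδ0, hδε⟩ := hδ
        set y' := min (x + δ/2) (min y b) with hy'
        have hxy' : x < y' := by
          apply lt_min (by linarith)
          exact lt_min hy hxab.2
        have hy'b : y' ≤ b := le_trans (min_le_right _ _) (min_le_right _ _)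
        have hy'y : y' ≤ y := le_trans (min_le_right _ _) (min_le_left _ _)
        have hy'I : y' ∈ Icc a b := ⟨le_trans hxI.1 hxy'.le, hy'b⟩
        have hdist : dist y' x < δ := by
          rw [Real.dist_eq, abs_of_nonneg (by linarith)]
          have : y' ≤ x + δ/2 := min_le_left _ _
          linarith
        have hFcε : F y' ^ c ≤ F x ^ c + ε := by
          have := hδε hdist
          rw [Real.dist_eq] at this
          have := abs_lt.1 this
          linarith [this.2]
        have hΔ : F y' - F x = ∫ t in x..y', g t := hFdiff x hxI y' hy'I hxy'.le
        have hΔnn : 0 ≤ F y' - F x := by linarith [hFmono x hxI y' hy'I hxy'.le]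
        have hsplit : Φ y' = Φ x + ∫ t in x..y', F t ^ c * g t := by
          rw [hΦ]
          exact (integral_add_adjacent_intervals (hint a ⟨le_refl a, hab⟩ x hxI)
            (hint x hxI y' hy'I)).symm
        have hbound : (∫ t in x..y', F t ^ c * g t) ≤ F y' ^ c * (F y' - F x) := by
          rw [hΔ, ← intervalIntegral.integral_const_mul]
          apply integral_mono_on hxy'.le (hint x hxI y' hy'I)
            (((hgsub x hxI y' hy'I)).const_mul _)
          intro t ht
          have htI : t ∈ Icc a b := ⟨le_trans hxI.1 ht.1, le_trans ht.2 hy'b⟩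
          exact mul_le_mul_of_nonneg_right
            (Real.rpow_le_rpow (hFnn t) (hFmono t htI y' hy'I ht.2) hc.le) (hg0 t)
        have hbern := bern_aux (hFnn x) (hFmono x hxI y' hy'I hxy'.le) hc
        have hc1 : (0:ℝ) < c + 1 := by linarith
        refine ⟨y', ?_, hxy', hy'y⟩
        show Φ y' ≤ F y' ^ (c+1) / (c+1) + ε * (F y' + (y' - a))
        have hS1 : Φ x ≤ F x ^ (c+1) / (c+1) + ε * (F x + (x - a)) := hxS
        have key1 : F x ^ (c+1) / (c+1) + F x ^ c * (F y' - F x) ≤ F y' ^ (c+1) / (c+1) := by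
          rw [div_add' _ _ _ hc1.ne', div_le_div_iff_of_pos_right hc1]
          nlinarith [hbern]
        have key2 : F y' ^ c * (F y' - F x) ≤ F x ^ c * (F y' - F x) + ε * (F y' - F x) := by
          nlinarith [hFcε, hΔnn]
        nlinarith [hsplit, hbound, hS1, key1, key2]
    have := hsub ⟨hab, le_refl b⟩
    exact this
  -- let ε → 0
  show Φ b ≤ F b ^ (c + 1) / (c + 1)
  have hM : 0 ≤ F b + (b - a) := by
    have := hFnn b; linarith
  by_contra hcon
  push_neg at hcon
  set K := F b ^ (c+1) / (c+1)
  set d := Φ b - K with hd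
  have hd0 : 0 < d := by simp only [hd]; linarith
  have := main (d / (2 * (F b + (b - a) + 1))) (by positivity)
  have hle : d / (2 * (F b + (b - a) + 1)) * (F b + (b - a)) ≤ d / 2 := by
    rw [div_mul_eq_mul_div, div_le_div_iff₀ (by positivity) (by norm_num)]
    nlinarith
  simp only [hd] at hle this ⊢
  linarith


/-- Unweighted one-dimensional Opial-type inequality: for `α, β > 0` with `α + β ≥ 1`
and `f` absolutely continuous on `[a,b]` with `f a = 0`,
`∫ₐᵇ |f|^β |f'|^α ≤ (α/(α+β))^(α/(α+β)) (∫ₐᵇ (x−a)^(α+β−1) dx)^(β/(α+β)) ∫ₐᵇ |f'|^(α+β)`. -/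
theorem opial_power_unweighted (a b α β : ℝ) (hab : a < b)
    (hα : 0 < α) (hβ : 0 < β) (hαβ : 1 ≤ α + β)
    (f f' : ℝ → ℝ)
    (hf' : IntervalIntegrable f' MeasureTheory.volume a b)
    (hf'p : IntervalIntegrable (fun x => |f' x| ^ (α + β)) MeasureTheory.volume a b)
    (hf : ∀ x ∈ Set.Icc a b, f x = ∫ t in a..x, f' t)
    (hfa : f a = 0) :
    ∫ x in a..b, |f x| ^ β * |f' x| ^ α ≤
      (α / (α + β)) ^ (α / (α + β)) *
        (∫ x in a..b, (x - a) ^ (α + β - 1)) ^ (β / (α + β)) *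
        ∫ x in a..b, |f' x| ^ (α + β) := by
  have hp0 : (0:ℝ) < α + β := by linarith
  set g : ℝ → ℝ := fun t => |f' t| ^ (α + β) with hgdef
  have hg0 : ∀ t, 0 ≤ g t := fun t => Real.rpow_nonneg (abs_nonneg _) _
  have hgIcc : IntegrableOn g (Icc a b) volume := by
    rw [integrableOn_Icc_iff_integrableOn_Ioc]
    exact hf'p.def'.mono_set (by rw [uIoc_of_le hab.le])
  set P : ℝ → ℝ := fun x => ∫ t in a..x, g t with hPdef
  set F : ℝ → ℝ := fun x => P (max a (min x b)) with hFdef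
  have hclamp : ∀ x, max a (min x b) ∈ Icc a b :=
    fun x => ⟨le_max_left _ _, max_le hab.le (min_le_right _ _)⟩
  have hFval : ∀ x ∈ Icc a b, F x = ∫ t in a..x, g t := by
    intro x hx
    simp only [hFdef, hPdef, min_eq_left hx.2, max_eq_right hx.1]
  have hPcont : ContinuousOn P (Icc a b) := by
    simp only [hPdef]
    rw [← uIcc_of_le hab.le]
    apply continuousOn_primitive_interval
    rwa [uIcc_of_le hab.le]
  have hFcont : Continuous F :=
    hPcont.comp_continuous (continuous_const.max (continuous_id.min continuous_const)) hclamp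
  have hFnn : ∀ x, 0 ≤ F x := by
    intro x
    have h := hclamp x
    simp only [hFdef, hPdef]
    exact intervalIntegral.integral_nonneg h.1 fun t _ => hg0 t
  have hf'Ioc : IntegrableOn f' (Ioc a b) volume :=
    hf'.def'.mono_set (by rw [uIoc_of_le hab.le])
  -- Step A : pointwise Hölder bound on |f|
  have hA : ∀ x ∈ Icc a b, |f x| ≤ (x - a) ^ ((α + β - 1)/(α + β)) * F x ^ (1/(α + β)) := by
    intro x hx
    have hax : a ≤ x := hx.1
    have h1 : |f x| ≤ ∫ t in a..x, |f' t| := by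
      rw [hf x hx]
      exact intervalIntegral.abs_integral_le_integral_abs hax
    rcases eq_or_lt_of_le hαβ with hp1 | hp1
    · -- α + β = 1
      have hFx : F x = ∫ t in a..x, |f' t| := by
        rw [hFval x hx]
        simp only [hgdef, ← hp1, Real.rpow_one]
      rw [← hp1]
      simp only [sub_self, zero_div, Real.rpow_zero, one_mul, div_one, Real.rpow_one]
      rw [hFx]
      exact h1
    · -- α + β > 1 : Hölder with exponents (q', α+β)
      set q' : ℝ := (α + β)/(α + β - 1) with hq'
      have hconj : q'.HolderConjugate (α + β) := (Real.HolderConjugate.conjExponent hp1).symm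
      set μx := volume.restrict (Ioc a x) with hμx
      haveI : IsFiniteMeasure μx := by
        constructor
        rw [hμx, Measure.restrict_apply_univ, Real.volume_Ioc]
        exact ENNReal.ofReal_lt_top
      have hsub : Ioc a x ⊆ Ioc a b := Ioc_subset_Ioc le_rfl hx.2
      have hf'x : IntegrableOn f' (Ioc a x) volume := hf'Ioc.mono_set hsub
      have hasm : AEStronglyMeasurable f' μx := hf'x.aestronglyMeasurable
      have hgx : IntegrableOn g (Ioc a x) volume :=
        hgIcc.mono_set (hsub.trans Ioc_subset_Icc_self)
      have hne0 : ENNReal.ofReal (α + β) ≠ 0 := by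
        rw [Ne, ENNReal.ofReal_eq_zero, not_le]; exact hp0
      have hmemf' : MemLp f' (ENNReal.ofReal (α + β)) μx := by
        apply (memLp_norm_rpow_iff (q := ENNReal.ofReal (α + β))
          (p := ENNReal.ofReal (α + β)) hasm hne0 ENNReal.ofReal_ne_top).1
        rw [ENNReal.div_self hne0 ENNReal.ofReal_ne_top, memLp_one_iff_integrable]
        have heq : (fun t => ‖f' t‖ ^ (ENNReal.ofReal (α + β)).toReal) = g := by
          funext t
          rw [Real.norm_eq_abs, ENNReal.toReal_ofReal hp0.le]
        rw [heq]
        exact hgx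
      have hmemabs : MemLp (fun t => |f' t|) (ENNReal.ofReal (α + β)) μx := by
        simpa only [Real.norm_eq_abs] using hmemf'.norm
      have hmem1 : MemLp (fun _ : ℝ => (1:ℝ)) (ENNReal.ofReal q') μx := memLp_const 1
      have hH := integral_mul_le_Lp_mul_Lq_of_nonneg (μ := μx) hconj
        (ae_of_all _ fun _ => zero_le_one) (ae_of_all _ fun t => abs_nonneg (f' t))
        hmem1 hmemabs
      simp only [one_mul, Real.one_rpow] at hH
      have hIabs : ∫ t in a..x, |f' t| = ∫ t, |f' t| ∂μx := by
        rw [intervalIntegral.integral_of_le hax, hμx]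
      have hIconst : ∫ _ : ℝ, (1:ℝ) ∂μx = x - a := by
        rw [MeasureTheory.integral_const, hμx, measureReal_def, Measure.restrict_apply_univ, Real.volume_Ioc,
          ENNReal.toReal_ofReal (by linarith), smul_eq_mul, mul_one]
      have hIg : ∫ t, g t ∂μx = F x := by
        rw [hFval x hx, intervalIntegral.integral_of_le hax, hμx]
      have hq'inv : 1/q' = (α + β - 1)/(α + β) := by
        rw [hq', one_div, inv_div]
      calc |f x| ≤ ∫ t in a..x, |f' t| := h1
        _ = ∫ t, |f' t| ∂μx := hIabs
        _ ≤ (∫ _ : ℝ, (1:ℝ) ∂μx) ^ (1/q') * (∫ t, |f' t| ^ (α+β) ∂μx) ^ (1/(α+β)) := hH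
        _ = (x - a) ^ ((α + β - 1)/(α + β)) * F x ^ (1/(α + β)) := by
            rw [hIconst, hq'inv]
            congr 1
            rw [← hIg]
  -- the two Hölder factors
  set u : ℝ → ℝ := fun x => |x - a| ^ (β * (α + β - 1)/(α + β)) with hu
  set v : ℝ → ℝ := fun x => F x ^ (β/(α + β)) * |f' x| ^ α with hv
  have hu0 : ∀ x, 0 ≤ u x := fun x => Real.rpow_nonneg (abs_nonneg _) _
  have hv0 : ∀ x, 0 ≤ v x :=
    fun x => mul_nonneg (Real.rpow_nonneg (hFnn x) _) (Real.rpow_nonneg (abs_nonneg _) _)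
  have hucont : Continuous u := by
    simp only [hu]
    exact (continuous_abs.comp (continuous_id.sub continuous_const)).rpow_const
      fun x => Or.inr (div_nonneg (mul_nonneg hβ.le (by linarith)) hp0.le)
  -- pointwise bound
  have hpt : ∀ x ∈ Ioc a b, |f x| ^ β * |f' x| ^ α ≤ u x * v x := by
    intro x hx
    have hxI : x ∈ Icc a b := Ioc_subset_Icc_self hx
    have hxa : 0 ≤ x - a := by linarith [hx.1]
    have h1 : |f x| ^ β ≤ ((x - a) ^ ((α + β - 1)/(α + β)) * F x ^ (1/(α + β))) ^ β :=
      Real.rpow_le_rpow (abs_nonneg _) (hA x hxI) hβ.le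
    have h2 : ((x - a) ^ ((α + β - 1)/(α + β)) * F x ^ (1/(α + β))) ^ β
        = u x * F x ^ (β/(α + β)) := by
      rw [Real.mul_rpow (Real.rpow_nonneg hxa _) (Real.rpow_nonneg (hFnn x) _),
        ← Real.rpow_mul hxa, ← Real.rpow_mul (hFnn x)]
      simp only [hu, abs_of_nonneg hxa]
      congr 1
      · congr 1; ring
      · congr 1; ring
    calc |f x| ^ β * |f' x| ^ α
        ≤ (u x * F x ^ (β/(α + β))) * |f' x| ^ α := by
          rw [← h2]
          exact mul_le_mul_of_nonneg_right h1 (Real.rpow_nonneg (abs_nonneg _) _)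
      _ = u x * v x := by simp only [hv]; ring
  -- main Hölder
  set μ := volume.restrict (Ioc a b) with hμ
  have hrs : ((α+β)/β).HolderConjugate ((α+β)/α) := by
    rw [Real.holderConjugate_iff]
    constructor
    · rw [lt_div_iff₀ hβ, one_mul]; linarith
    · rw [inv_div, inv_div]
      field_simp
      ring
  have hne0r : ENNReal.ofReal ((α+β)/β) ≠ 0 := by
    rw [Ne, ENNReal.ofReal_eq_zero, not_le]; positivity
  have hne0s : ENNReal.ofReal ((α+β)/α) ≠ 0 := by
    rw [Ne, ENNReal.ofReal_eq_zero, not_le]; positivity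
  have hupow : ∀ x, u x ^ ((α+β)/β) = |x - a| ^ (α + β - 1) := by
    intro x
    simp only [hu]
    rw [← Real.rpow_mul (abs_nonneg _)]
    congr 1
    field_simp
  have hvpow : ∀ x, v x ^ ((α+β)/α) = F x ^ (β/α) * g x := by
    intro x
    simp only [hv, hgdef]
    rw [Real.mul_rpow (Real.rpow_nonneg (hFnn x) _) (Real.rpow_nonneg (abs_nonneg _) _),
      ← Real.rpow_mul (hFnn x), ← Real.rpow_mul (abs_nonneg _)]
    congr 1
    · congr 1; field_simp
    · congr 1; field_simp
  have hmemu : MemLp u (ENNReal.ofReal ((α+β)/β)) μ := by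
    apply (memLp_norm_rpow_iff (q := ENNReal.ofReal ((α+β)/β))
      (p := ENNReal.ofReal ((α+β)/β)) hucont.aestronglyMeasurable hne0r ENNReal.ofReal_ne_top).1
    rw [ENNReal.div_self hne0r ENNReal.ofReal_ne_top, memLp_one_iff_integrable]
    have heq : (fun x => ‖u x‖ ^ (ENNReal.ofReal ((α+β)/β)).toReal)
        = fun x => |x - a| ^ (α + β - 1) := by
      funext x
      rw [Real.norm_of_nonneg (hu0 x), ENNReal.toReal_ofReal (by positivity), hupow]
    rw [heq]
    exact ((continuous_abs.comp (continuous_id.sub continuous_const)).rpow_const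
      fun x => Or.inr (by linarith)).integrableOn_Ioc
  have hf'asm : AEStronglyMeasurable f' μ := hf'Ioc.aestronglyMeasurable
  have hFpowcont : Continuous fun x => F x ^ (β/(α+β)) :=
    hFcont.rpow_const fun x => Or.inr (by positivity)
  have hvasm : AEStronglyMeasurable v μ := by
    simp only [hv]
    apply AEStronglyMeasurable.mul hFpowcont.aestronglyMeasurable
    have := hf'asm.norm.aemeasurable.pow (aemeasurable_const (b := α))
    simpa only [Real.norm_eq_abs] using this.aestronglyMeasurable
  have hvint : Integrable (fun x => F x ^ (β/α) * g x) μ := by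
    have : IntervalIntegrable (fun x => F x ^ (β/α) * g x) volume a b :=
      hf'p.continuousOn_mul
        (hFcont.rpow_const fun x => Or.inr (by positivity)).continuousOn
    exact this.def'.mono_set (by rw [uIoc_of_le hab.le])
  have hmemv : MemLp v (ENNReal.ofReal ((α+β)/α)) μ := by
    apply (memLp_norm_rpow_iff (q := ENNReal.ofReal ((α+β)/α))
      (p := ENNReal.ofReal ((α+β)/α)) hvasm hne0s ENNReal.ofReal_ne_top).1
    rw [ENNReal.div_self hne0s ENNReal.ofReal_ne_top, memLp_one_iff_integrable]
    have heq : (fun x => ‖v x‖ ^ (ENNReal.ofReal ((α+β)/α)).toReal)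
        = fun x => F x ^ (β/α) * g x := by
      funext x
      rw [Real.norm_of_nonneg (hv0 x), ENNReal.toReal_ofReal (by positivity), hvpow]
    rw [heq]
    exact hvint
  have huv_int : Integrable (fun x => u x * v x) μ := by
    rw [← memLp_one_iff_integrable]
    have h1 : (1:ℝ≥0∞)/1 = 1/(ENNReal.ofReal ((α+β)/β)) + 1/(ENNReal.ofReal ((α+β)/α)) := by
      rw [one_div, one_div, one_div, ← ENNReal.ofReal_inv_of_pos (by positivity),
        ← ENNReal.ofReal_inv_of_pos (by positivity),
        ← ENNReal.ofReal_add (by positivity) (by positivity), hrs.inv_add_inv_eq_one]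
      simp
    have := hmemv.smul (𝕜 := ℝ) hmemu (hpqr := ⟨by simpa only [one_div] using h1.symm⟩)
    exact this
  have hHold := integral_mul_le_Lp_mul_Lq_of_nonneg (μ := μ) hrs
    (ae_of_all _ hu0) (ae_of_all _ hv0) hmemu hmemv
  have hAint : ∫ x, u x ^ ((α+β)/β) ∂μ = ∫ x in a..b, (x - a) ^ (α + β - 1) := by
    rw [intervalIntegral.integral_of_le hab.le, hμ]
    refine setIntegral_congr_fun measurableSet_Ioc fun x hx => ?_
    show u x ^ ((α+β)/β) = (x - a) ^ (α + β - 1)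
    rw [hupow x, abs_of_nonneg (by linarith [hx.1] : (0:ℝ) ≤ x - a)]
  have hA0 : 0 ≤ ∫ x in a..b, (x - a) ^ (α + β - 1) :=
    intervalIntegral.integral_nonneg hab.le
      fun t ht => Real.rpow_nonneg (by linarith [ht.1]) _
  have hBint : ∫ x, v x ^ ((α+β)/α) ∂μ = ∫ x in a..b, F x ^ (β/α) * g x := by
    rw [intervalIntegral.integral_of_le hab.le, hμ]
    refine setIntegral_congr_fun measurableSet_Ioc fun x _ => ?_
    show v x ^ ((α+β)/α) = F x ^ (β/α) * g x
    exact hvpow x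
  have hkey := key_chain hab.le (by positivity : (0:ℝ) < β/α) g F hg0 hf'p hFcont hFnn hFval
  have hc1 : β/α + 1 = (α+β)/α := by field_simp; ring
  have hB2 : (∫ x, v x ^ ((α+β)/α) ∂μ) ^ (1/((α+β)/α)) ≤ (α/(α+β)) ^ (α/(α+β)) * F b := by
    have hs0 : (0:ℝ) ≤ ∫ x, v x ^ ((α+β)/α) ∂μ :=
      integral_nonneg fun x => Real.rpow_nonneg (hv0 x) _
    have h1 : (∫ x, v x ^ ((α+β)/α) ∂μ) ≤ (α/(α+β)) * F b ^ ((α+β)/α) := by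
      rw [hBint]
      calc (∫ x in a..b, F x ^ (β/α) * g x) ≤ F b ^ (β/α + 1) / (β/α + 1) := hkey
        _ = (α/(α+β)) * F b ^ ((α+β)/α) := by
            rw [hc1, div_eq_mul_inv, inv_div, mul_comm]
    have h2 := Real.rpow_le_rpow hs0 h1 (by positivity : (0:ℝ) ≤ 1/((α+β)/α))
    calc (∫ x, v x ^ ((α+β)/α) ∂μ) ^ (1/((α+β)/α))
        ≤ ((α/(α+β)) * F b ^ ((α+β)/α)) ^ (1/((α+β)/α)) := h2
      _ = (α/(α+β)) ^ (α/(α+β)) * F b := by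
          rw [one_div, inv_div,
            Real.mul_rpow (by positivity) (Real.rpow_nonneg (hFnn b) _),
            ← Real.rpow_mul (hFnn b),
            show (α+β)/α * (α/(α+β)) = 1 by field_simp, Real.rpow_one]
  calc ∫ x in a..b, |f x| ^ β * |f' x| ^ α
      = ∫ x, |f x| ^ β * |f' x| ^ α ∂μ := by
        rw [intervalIntegral.integral_of_le hab.le, hμ]
    _ ≤ ∫ x, u x * v x ∂μ := by
        apply integral_mono_of_nonneg
          (ae_of_all _ fun x =>
            mul_nonneg (Real.rpow_nonneg (abs_nonneg _) _) (Real.rpow_nonneg (abs_nonneg _) _))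
          huv_int
        rw [hμ]
        filter_upwards [ae_restrict_mem measurableSet_Ioc] with x hx
        exact hpt x hx
    _ ≤ (∫ x, u x ^ ((α+β)/β) ∂μ) ^ (1/((α+β)/β)) *
          (∫ x, v x ^ ((α+β)/α) ∂μ) ^ (1/((α+β)/α)) := hHold
    _ ≤ (∫ x in a..b, (x - a) ^ (α + β - 1)) ^ (β/(α+β)) *
          ((α/(α+β)) ^ (α/(α+β)) * F b) := by
        rw [hAint, one_div, inv_div]
        exact mul_le_mul_of_nonneg_left hB2 (Real.rpow_nonneg hA0 _)
    _ = (α / (α + β)) ^ (α / (α + β)) *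
          (∫ x in a..b, (x - a) ^ (α + β - 1)) ^ (β / (α + β)) *
          ∫ x in a..b, g x := by
        rw [hFval b ⟨hab.le, le_refl b⟩]
        ring
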